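/- arXiv:1904.07557 — 6 statements merged into one kernel-verified Lean document; each statement's English description precedes it below -/
import Mathlib

section
/- Let f : X → X have index i ≥ 1 and period p, i.e., f^(p+i) = f^i with i, p minimal (p ≥ 1, i minimal such that f^l = f^i for some l > i). Let r := τ ∘ (f × f) be the Lyubashenko map, where τ is the twist. If p is even then r^(p+i) = r^i, while if p is odd then r^(2p+i) = r^i. In both cases r is of finite order. -/
/-- The index of a map: the least `j` such that `f^[l] = f^[j]` for some `l > j`. -/
noncomputable def mapInd {A : Type*} (f : A → A) : ℕ := sInf {j | ∃ l, j < l ∧ f^[l] = f^[j]}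

/-- The period of a map: the least `p ≥ 1` with `f^[p + mapInd f] = f^[mapInd f]`. -/
noncomputable def mapPer {A : Type*} (f : A → A) : ℕ :=
  sInf {p | 1 ≤ p ∧ f^[p + mapInd f] = f^[mapInd f]}

/-- A map is of finite order if `f^[p+i] = f^[i]` for some `p ≥ 1`, `i ≥ 0`. -/
def MapFiniteOrder {A : Type*} (f : A → A) : Prop :=
  ∃ p, 1 ≤ p ∧ ∃ i, f^[p + i] = f^[i]

theorem stmt7 {X : Type*} (f : X → X) (i p : ℕ)
    (hfin : MapFiniteOrder f) (hi : mapInd f = i) (hp : mapPer f = p) (hi1 : 1 ≤ i) :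
    let τ : X × X → X × X := fun q => (q.2, q.1)
    let r : X × X → X × X := τ ∘ Prod.map f f
    (Even p → r^[p + i] = r^[i]) ∧ (Odd p → r^[2 * p + i] = r^[i]) ∧
      MapFiniteOrder r := by
  intro τ r
  -- first extract f^[p+i] = f^[i] and 1 ≤ p
  obtain ⟨p0, hp0, i0, hpi0⟩ := hfin
  have hIndNe : {j | ∃ l, j < l ∧ f^[l] = f^[j]}.Nonempty :=
    ⟨i0, p0 + i0, by omega, hpi0⟩
  have hImem : mapInd f ∈ {j | ∃ l, j < l ∧ f^[l] = f^[j]} := Nat.sInf_mem hIndNe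
  rw [hi] at hImem
  obtain ⟨l, hl, hlf⟩ := hImem
  have hPerNe : {q | 1 ≤ q ∧ f^[q + mapInd f] = f^[mapInd f]}.Nonempty := by
    refine ⟨l - i, by omega, ?_⟩
    rw [hi]
    have : l - i + i = l := by omega
    rw [this, hlf]
  have hPmem := Nat.sInf_mem hPerNe
  rw [show sInf {q | 1 ≤ q ∧ f^[q + mapInd f] = f^[mapInd f]} = mapPer f from rfl, hp, hi]
    at hPmem
  obtain ⟨hp1, hfp⟩ := hPmem
  -- f^[k*p + i] = f^[i]
  have hfkp : ∀ k, f^[k * p + i] = f^[i] := by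
    intro k
    induction k with
    | zero => simp
    | succ k ih =>
      have : (k + 1) * p + i = p + (k * p + i) := by ring
      rw [this, Function.iterate_add, ih, ← Function.iterate_add, hfp]
  -- key formula for r^[n]
  have key : ∀ n, r^[n] = fun q : X × X =>
      if n % 2 = 0 then (f^[n] q.1, f^[n] q.2) else (f^[n] q.2, f^[n] q.1) := by
    intro n
    induction n with
    | zero => funext q; simp
    | succ n ih =>
      funext q
      rw [Function.iterate_succ', Function.comp_apply, ih]
      have hcomm : ∀ x, f (f^[n] x) = f^[n] (f x) := fun x =>
        (Function.iterate_succ_apply' f n x).symm.trans (Function.iterate_succ_apply f n x)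
      rcases Nat.even_or_odd n with he | ho
      · have h0 : n % 2 = 0 := Nat.even_iff.mp he
        have h1 : (n + 1) % 2 = 1 := by omega
        simp only [h0, h1]
        simp [r, τ, Prod.map, hcomm, Function.iterate_succ_apply]
      · have h0 : n % 2 = 1 := Nat.odd_iff.mp ho
        have h1 : (n + 1) % 2 = 0 := by omega
        simp only [h0, h1]
        simp [r, τ, Prod.map, hcomm, Function.iterate_succ_apply]
  refine ⟨?_, ?_, ?_⟩
  · intro hpe
    have h2 : (p + i) % 2 = i % 2 := by
      obtain ⟨c, hc⟩ := hpe; omega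
    rw [key, key, h2]
    have : f^[p + i] = f^[i] := hfp
    rw [this]
  · intro _
    have h2 : (2 * p + i) % 2 = i % 2 := by omega
    rw [key, key, h2]
    have := hfkp 2
    rw [show 2 * p + i = 2 * p + i from rfl, this]
  · refine ⟨2 * p, by omega, i, ?_⟩
    have h2 : (2 * p + i) % 2 = i % 2 := by omega
    rw [key, key, h2, hfkp 2]
end

section
/- Let (B, +, ∘) be a left semi-brace and define λ_a(b) := a ∘ (a⁻ + b) for a, b ∈ B. Then λ_{a ∘ b} = λ_a ∘ λ_b for all a, b ∈ B, i.e., λ : (B,∘) → Maps(B,B) satisfies λ_a(λ_b(c)) = λ_{a∘b}(c) for all a, b, c ∈ B. -/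
/-- A left semi-brace: a semigroup operation `add` together with a group
structure `∘` (the multiplication of the `Group` instance) satisfying
`a ∘ (b + c) = a ∘ b + a ∘ (a⁻¹ + c)`. -/
structure IsLeftSemiBrace (B : Type*) [Group B] (add : B → B → B) : Prop where
  add_assoc : ∀ a b c : B, add (add a b) c = add a (add b c)
  semibrace : ∀ a b c : B, a * add b c = add (a * b) (a * add a⁻¹ c)

theorem stmt10 {B : Type*} [Group B] (add : B → B → B)
    (h : IsLeftSemiBrace B add) :
    ∀ a b c : B, (a * b) * add (a * b)⁻¹ c = a * add a⁻¹ (b * add b⁻¹ c) := by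
  intro a b c
  have key := h.semibrace b (b⁻¹ * a⁻¹) c
  rw [mul_inv_cancel_left] at key
  rw [mul_inv_rev, mul_assoc, key]
end

section
/- Let (B, +, ∘) be a left semi-brace with λ_a(b) := a ∘ (a⁻ + b) and ρ_b(a) := (a⁻ + b)⁻ ∘ b, and r_B(a,b) := (λ_a(b), ρ_b(a)). Then λ_{λ_a(b)}(λ_{ρ_b(a)}(c)) = λ_a(λ_b(c)) for all a, b, c ∈ B (the first braid-type identity for r_B holds in any left semi-brace). -/
theorem stmt12 {B : Type*} [Group B] (add : B → B → B)
    (h : IsLeftSemiBrace B add) :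
    ∀ a b c : B,
      letI lam : B → B → B := fun x y => x * add x⁻¹ y
      letI rho : B → B → B := fun y x => (add x⁻¹ y)⁻¹ * y
      lam (lam a b) (lam (rho b a) c) = lam a (lam b c) := by
  have hom : ∀ x y z : B, (x * y) * add (x * y)⁻¹ z = x * add x⁻¹ (y * add y⁻¹ z) := by
    intro x y z
    have h1 := h.semibrace y (y⁻¹ * x⁻¹) z
    have h2 : y * (y⁻¹ * x⁻¹) = x⁻¹ := by group
    rw [h2] at h1
    rw [mul_inv_rev, mul_assoc, h1]
  intro a b c
  simp only
  have key : (a * add a⁻¹ b) * ((add a⁻¹ b)⁻¹ * b) = a * b := by group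
  rw [← hom, key, hom]
end

section
/- Let (B, +, ∘) be a left semi-brace with λ_a(b) := a ∘ (a⁻ + b), ρ_b(a) := (a⁻ + b)⁻ ∘ b, and r_B(a,b) := (λ_a(b), ρ_b(a)). Then r_B is a set-theoretical solution of the Yang–Baxter equation, i.e., (r_B × id)(id × r_B)(r_B × id) = (id × r_B)(r_B × id)(id × r_B), if and only if a + λ_b(c) ∘ (0 + ρ_c(b)) = a + b ∘ (0 + c) for all a, b, c ∈ B. -/
/-- The map `r` acting on the first and second components of a triple. -/
def R12 {X : Type*} (r : X × X → X × X) : X × X × X → X × X × X :=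
  fun p => ((r (p.1, p.2.1)).1, (r (p.1, p.2.1)).2, p.2.2)

/-- The map `r` acting on the second and third components of a triple. -/
def R23 {X : Type*} (r : X × X → X × X) : X × X × X → X × X × X :=
  fun p => (p.1, (r (p.2.1, p.2.2)).1, (r (p.2.1, p.2.2)).2)

/-- `r` is a set-theoretical solution of the Yang-Baxter equation. -/
def IsYBE {X : Type*} (r : X × X → X × X) : Prop :=
  R12 r ∘ R23 r ∘ R12 r = R23 r ∘ R12 r ∘ R23 r

section Helpers

variable {B : Type*} [Group B] (add : B → B → B)

/-- The lambda map of a semi-brace. -/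
def lamF (x y : B) : B := x * add x⁻¹ y

/-- The rho map of a semi-brace. -/
def rhoF (y x : B) : B := (add x⁻¹ y)⁻¹ * y

lemma prodF_eq (a b : B) : lamF add a b * rhoF add b a = a * b := by
  simp [lamF, rhoF, mul_assoc]

lemma lamF_comp (h : IsLeftSemiBrace B add) (a b c : B) :
    lamF add a (lamF add b c) = lamF add (a * b) c := by
  unfold lamF
  have hs := h.semibrace b (b⁻¹ * a⁻¹) c
  rw [mul_inv_rev, mul_assoc a b, hs]
  have hb : b * (b⁻¹ * a⁻¹) = a⁻¹ := by group
  rw [hb]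

/-- Pull a left factor `b⁻¹` out of a sum. -/
lemma shiftF (h : IsLeftSemiBrace B add) (b x c : B) :
    add (b⁻¹ * x) c = b⁻¹ * add x (b * add b⁻¹ c) := by
  have hs := h.semibrace b (b⁻¹ * x) c
  have hb : b * (b⁻¹ * x) = x := by group
  rw [hb] at hs
  rw [← hs]
  group

lemma p3_eq (h : IsLeftSemiBrace B add) (a b c : B) :
    rhoF add c (rhoF add b a)
      = (add (add a⁻¹ b) (lamF add b c))⁻¹ * (b * c) := by
  unfold rhoF
  rw [show ((add a⁻¹ b)⁻¹ * b)⁻¹ = b⁻¹ * add a⁻¹ b by group]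
  rw [shiftF add h b (add a⁻¹ b) c]
  show (b⁻¹ * add (add a⁻¹ b) (lamF add b c))⁻¹ * c = _
  group

lemma q3_eq (h : IsLeftSemiBrace B add) (a b c : B) :
    rhoF add (rhoF add c b) (rhoF add (lamF add b c) a)
      = (add (add a⁻¹ (lamF add b c)) (lamF add (lamF add b c) (rhoF add c b)))⁻¹ * (b * c) := by
  have hgr : lamF add b c * rhoF add c b = b * c := prodF_eq add b c
  show (add (rhoF add (lamF add b c) a)⁻¹ (rhoF add c b))⁻¹ * (rhoF add c b) = _
  have hinv : (rhoF add (lamF add b c) a)⁻¹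
      = (lamF add b c)⁻¹ * add a⁻¹ (lamF add b c) := by unfold rhoF; group
  rw [hinv, shiftF add h (lamF add b c) (add a⁻¹ (lamF add b c)) (rhoF add c b)]
  show ((lamF add b c)⁻¹ * add (add a⁻¹ (lamF add b c))
      (lamF add (lamF add b c) (rhoF add c b)))⁻¹ * (rhoF add c b) = _
  rw [← hgr]
  group

lemma sumF_eq (h : IsLeftSemiBrace B add) (b c : B) :
    add b (lamF add b c) = b * add 1 c := by
  have hs := h.semibrace b 1 c
  rw [mul_one] at hs
  exact hs.symm

/-- The crucial equivalence: equality of the third YBE components is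
equivalent to the semibrace condition with `a⁻¹` in first position. -/
lemma key_iff (h : IsLeftSemiBrace B add) (a b c : B) :
    rhoF add c (rhoF add b a) = rhoF add (rhoF add c b) (rhoF add (lamF add b c) a)
      ↔ add a⁻¹ (lamF add b c * add 1 (rhoF add c b)) = add a⁻¹ (b * add 1 c) := by
  rw [p3_eq add h, q3_eq add h, mul_left_inj, inv_inj,
    h.add_assoc, h.add_assoc, sumF_eq add h, sumF_eq add h]
  exact eq_comm

end Helpers

theorem stmt13 {B : Type*} [Group B] (add : B → B → B)
    (h : IsLeftSemiBrace B add) :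
    letI lam : B → B → B := fun x y => x * add x⁻¹ y
    letI rho : B → B → B := fun y x => (add x⁻¹ y)⁻¹ * y
    IsYBE (fun p : B × B => (lam p.1 p.2, rho p.2 p.1)) ↔
      ∀ a b c : B, add a (lam b c * add 1 (rho c b)) = add a (b * add 1 c) := by
  show IsYBE (fun p : B × B => (lamF add p.1 p.2, rhoF add p.2 p.1)) ↔
      ∀ a b c : B, add a (lamF add b c * add 1 (rhoF add c b)) = add a (b * add 1 c)
  constructor
  · intro hy a b c
    have h3 := congrArg (fun t : B × B × B => t.2.2)
      (congrFun hy (a⁻¹, b, c))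
    simp only [R12, R23, Function.comp_apply] at h3
    have hk := (key_iff add h a⁻¹ b c).mp h3
    rwa [inv_inv] at hk
  · intro hc
    unfold IsYBE
    funext p
    obtain ⟨a, b, c⟩ := p
    simp only [R12, R23, Function.comp_apply]
    have e1 : lamF add (lamF add a b) (lamF add (rhoF add b a) c)
        = lamF add a (lamF add b c) := by
      rw [lamF_comp add h, lamF_comp add h, prodF_eq add]
    have e3 : rhoF add c (rhoF add b a)
        = rhoF add (rhoF add c b) (rhoF add (lamF add b c) a) :=
      (key_iff add h a b c).mpr (hc a⁻¹ b c)
    have hP : lamF add (lamF add a b) (lamF add (rhoF add b a) c) *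
        (rhoF add (lamF add (rhoF add b a) c) (lamF add a b) * rhoF add c (rhoF add b a))
        = a * (b * c) := by
      rw [← mul_assoc, prodF_eq add, mul_assoc, prodF_eq add, ← mul_assoc,
        prodF_eq add, mul_assoc]
    have hQ : lamF add a (lamF add b c) *
        (lamF add (rhoF add (lamF add b c) a) (rhoF add c b) *
          rhoF add (rhoF add c b) (rhoF add (lamF add b c) a))
        = a * (b * c) := by
      rw [prodF_eq add, ← mul_assoc, prodF_eq add, mul_assoc, prodF_eq add]
    have h23 : rhoF add (lamF add (rhoF add b a) c) (lamF add a b) * rhoF add c (rhoF add b a)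
        = lamF add (rhoF add (lamF add b c) a) (rhoF add c b) *
          rhoF add (rhoF add c b) (rhoF add (lamF add b c) a) := by
      apply mul_left_cancel (a := lamF add (lamF add a b) (lamF add (rhoF add b a) c))
      rw [hP, e1, hQ]
    rw [e3] at h23
    have e2 := mul_right_cancel h23
    simp only [Prod.mk.injEq]
    exact ⟨e1, e2, e3⟩
end

section
/- Let (B, +, ∘) be a left semi-brace such that c + a ∘ (0 + b) = c + a ∘ b for all a, b, c ∈ B (equivalently, ρ is an anti-homomorphism). Then condition a + λ_b(c) ∘ (0 + ρ_c(b)) = a + b ∘ (0 + c) holds for all a, b, c ∈ B, and hence the associated map r_B is a set-theoretical solution of the Yang–Baxter equation. -/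
section Aux

variable {B : Type*} [Group B]

/-- `λ_x(y)` in a left semi-brace. -/
def lamB (add : B → B → B) (x y : B) : B := x * add x⁻¹ y

/-- `ρ_y(x)` in a left semi-brace. -/
def rhoB (add : B → B → B) (y x : B) : B := (add x⁻¹ y)⁻¹ * y

variable {add : B → B → B}

theorem lam_hom (h : IsLeftSemiBrace B add) (a b c : B) : lamB add a (lamB add b c) = lamB add (a * b) c := by
  unfold lamB
  have : (a * b) * add (a * b)⁻¹ c = a * (b * add (b⁻¹ * a⁻¹) c) := by
    rw [mul_inv_rev, mul_assoc]
  rw [this, h.semibrace b (b⁻¹ * a⁻¹) c]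
  group

theorem lam_add (h : IsLeftSemiBrace B add) (a x y : B) :
    lamB add a (add x y) = add (lamB add a x) (lamB add a y) := by
  unfold lamB
  rw [← h.add_assoc, h.semibrace a (add a⁻¹ x) y]

theorem lam_rho (h : IsLeftSemiBrace B add) (a b : B) : lamB add a b * rhoB add b a = a * b := by
  unfold lamB rhoB; group

theorem rho_eq (h : IsLeftSemiBrace B add) (y x : B) : rhoB add y x = (lamB add x y)⁻¹ * (x * y) := by
  unfold lamB rhoB; group

theorem lam_one (z : B) : lamB add 1 z = add 1 z := by
  unfold lamB; simp

theorem lam_one_add (h : IsLeftSemiBrace B add) (a z : B) : lamB add a (add 1 z) = lamB add a z := by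
  rw [← lam_one (add := add) z, lam_hom h, mul_one]

theorem mulOneAdd (h : IsLeftSemiBrace B add) (b c : B) : b * add 1 c = add b (lamB add b c) := by
  have := h.semibrace b 1 c
  rwa [mul_one] at this

theorem absorb (h : IsLeftSemiBrace B add) (hanti : ∀ a b c : B, add c (a * add 1 b) = add c (a * b))
    (c0 x y : B) : add c0 (add x (lamB add x y)) = add c0 (x * y) := by
  rw [← mulOneAdd h, hanti]

/-- Condition (s1) : the first conjunct. -/
theorem key1 (h : IsLeftSemiBrace B add) (hanti : ∀ a b c : B, add c (a * add 1 b) = add c (a * b))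
    (a b c : B) :
    add a (lamB add b c * add 1 (rhoB add c b)) = add a (b * add 1 c) := by
  rw [mulOneAdd h (lamB add b c), absorb h hanti, lam_rho h,
    mulOneAdd h b, absorb h hanti]

theorem prod_expand (h : IsLeftSemiBrace B add) (hanti : ∀ a b c : B, add c (a * add 1 b) = add c (a * b))
    (a b c : B) :
    lamB add a b * lamB add (rhoB add b a) c =
      add (lamB add (a * b) c) (lamB add (a * lamB add b c) (rhoB add c b)) := by
  have e1 : lamB add a b * lamB add (rhoB add b a) c
      = (a * b) * add (rhoB add b a)⁻¹ c := by
    show lamB add a b * (rhoB add b a * add (rhoB add b a)⁻¹ c) = _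
    rw [← mul_assoc, lam_rho h]
  have e2 : (a * b) * (rhoB add b a)⁻¹ = lamB add a b := by
    rw [eq_comm, eq_mul_inv_iff_mul_eq, lam_rho h]
  rw [e1, h.semibrace (a * b) (rhoB add b a)⁻¹ c, e2]
  have e3 : (a * b) * add (a * b)⁻¹ c = lamB add a (lamB add b c) := by
    rw [lam_hom h]; rfl
  rw [e3, ← lam_add h, ← lam_one_add h a (add b (lamB add b c)),
    absorb h hanti, ← lam_rho h b c,
    ← absorb h hanti 1 (lamB add b c) (rhoB add c b),
    lam_one_add h, lam_add h, lam_hom h, lam_hom h]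

/-- Condition C2. -/
theorem key2 (h : IsLeftSemiBrace B add) (hanti : ∀ a b c : B, add c (a * add 1 b) = add c (a * b))
    (a b c : B) :
    rhoB add (lamB add (rhoB add b a) c) (lamB add a b) =
      lamB add (rhoB add (lamB add b c) a) (rhoB add c b) := by
  have hab : lamB add (lamB add a b) (lamB add (rhoB add b a) c)
      = lamB add (a * b) c := by rw [lam_hom h, lam_rho h]
  -- LHS
  have hl : rhoB add (lamB add (rhoB add b a) c) (lamB add a b)
      = (lamB add (a * b) c)⁻¹ *
        add (lamB add (a * b) c) (lamB add (a * lamB add b c) (rhoB add c b)) := by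
    rw [rho_eq h, hab, prod_expand h hanti]
  -- RHS
  have hu : rhoB add (lamB add b c) a
      = (lamB add (a * b) c)⁻¹ * (a * lamB add b c) := by
    rw [rho_eq h, lam_hom h]
  have hr : lamB add (rhoB add (lamB add b c) a) (rhoB add c b)
      = (lamB add (a * b) c)⁻¹ *
        add (lamB add (a * b) c) (lamB add (a * lamB add b c) (rhoB add c b)) := by
    show rhoB add (lamB add b c) a *
        add (rhoB add (lamB add b c) a)⁻¹ (rhoB add c b) = _
    rw [hu]
    have : ((lamB add (a * b) c)⁻¹ * (a * lamB add b c))⁻¹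
        = (a * lamB add b c)⁻¹ * lamB add (a * b) c := by group
    rw [this, mul_assoc]
    congr 1
    rw [h.semibrace (a * lamB add b c) ((a * lamB add b c)⁻¹ * lamB add (a * b) c)
      (rhoB add c b)]
    congr 1
    · group
  rw [hl, hr]

/-- Condition C1. -/
theorem key_c1 (h : IsLeftSemiBrace B add) (a b c : B) :
    lamB add (lamB add a b) (lamB add (rhoB add b a) c)
      = lamB add a (lamB add b c) := by
  rw [lam_hom h, lam_rho h, ← lam_hom h]

/-- Condition C3. -/
theorem key3 (h : IsLeftSemiBrace B add) (hanti : ∀ a b c : B, add c (a * add 1 b) = add c (a * b))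
    (a b c : B) :
    rhoB add c (rhoB add b a) =
      rhoB add (rhoB add c b) (rhoB add (lamB add b c) a) := by
  have hab : lamB add (lamB add a b) (lamB add (rhoB add b a) c)
      = lamB add (a * b) c := by rw [lam_hom h, lam_rho h]
  have h2 := key2 h hanti a b c
  rw [rho_eq h (rhoB add c b), ← h2, rho_eq h (lamB add (rhoB add b a) c), hab]
  rw [rho_eq h c (rhoB add b a)]
  rw [rho_eq h b a, rho_eq h c b,
    rho_eq h (lamB add b c) a, lam_hom h]
  group

end Aux

theorem stmt14 {B : Type*} [Group B] (add : B → B → B)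
    (h : IsLeftSemiBrace B add)
    (hanti : ∀ a b c : B, add c (a * add 1 b) = add c (a * b)) :
    letI lam : B → B → B := fun x y => x * add x⁻¹ y
    letI rho : B → B → B := fun y x => (add x⁻¹ y)⁻¹ * y
    (∀ a b c : B, add a (lam b c * add 1 (rho c b)) = add a (b * add 1 c)) ∧
      IsYBE (fun p : B × B => (lam p.1 p.2, rho p.2 p.1)) := by
  refine ⟨fun a b c => key1 h hanti a b c, ?_⟩
  unfold IsYBE
  funext p
  obtain ⟨a, b, c⟩ := p
  show ((R12 _ ∘ R23 _ ∘ R12 _) (a, b, c) : B × B × B) = (R23 _ ∘ R12 _ ∘ R23 _) (a, b, c)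
  simp only [Function.comp_apply, R12, R23]
  refine Prod.ext ?_ (Prod.ext ?_ ?_) <;> dsimp only
  · exact key_c1 h a b c
  · exact key2 h hanti a b c
  · exact key3 h hanti a b c
end

section
/- Let r be a left non-degenerate set-theoretical solution of the Yang–Baxter equation on a set X (so each λ_x is bijective). Then the derived map r'(x,y) := (y, λ_y(ρ_{λ_x⁻¹(y)}(x))) is again a set-theoretical solution of the Yang–Baxter equation. -/
theorem stmt15 {X : Type*} [Nonempty X] (r : X × X → X × X)
    (hr : IsYBE r)
    (lam : X → X → X) (rho : X → X → X)
    (hlam : ∀ x y, lam x y = (r (x, y)).1)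
    (hrho : ∀ x y, rho y x = (r (x, y)).2)
    (hnd : ∀ x, Function.Bijective (lam x)) :
    IsYBE (fun p : X × X =>
      (p.2, lam p.2 (rho (Function.invFun (lam p.1) p.2) p.1))) := by
  classical
  have hre : ∀ x y, r (x, y) = (lam x y, rho y x) := fun x y =>
    Prod.ext (hlam x y).symm (hrho x y).symm
  have hinvR : ∀ a t, lam a (Function.invFun (lam a) t) = t := fun a t =>
    Function.rightInverse_invFun (hnd a).2 t
  have hinvL : ∀ a t, Function.invFun (lam a) (lam a t) = t := fun a t =>
    Function.leftInverse_invFun (hnd a).1 t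
  have hr2 : R12 r ∘ R23 r ∘ R12 r = R23 r ∘ R12 r ∘ R23 r := hr
  have YB := fun (x y z : X) => congrFun hr2 (x, y, z)
  simp only [Function.comp_apply, R12, R23, hre, Prod.mk.injEq] at YB
  have YB1 : ∀ x y z, lam (lam x y) (lam (rho y x) z) = lam x (lam y z) :=
    fun x y z => (YB x y z).1
  have YB2 : ∀ x y z, rho (lam (rho y x) z) (lam x y) = lam (rho (lam y z) x) (rho z y) :=
    fun x y z => (YB x y z).2.1
  have YB3 : ∀ x y z, rho z (rho y x) = rho (rho z y) (rho (lam y z) x) :=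
    fun x y z => (YB x y z).2.2
  show R12 _ ∘ R23 _ ∘ R12 _ = R23 _ ∘ R12 _ ∘ R23 _
  funext pt
  obtain ⟨x, y, z⟩ := pt
  simp only [R12, R23, Function.comp_apply, Prod.mk.injEq]
  refine ⟨trivial, trivial, ?_⟩
  set b := Function.invFun (lam x) y with hb
  set c := Function.invFun (lam b) (Function.invFun (lam x) z) with hc
  have hy : lam x b = y := hinvR x y
  have hz : lam x (lam b c) = z := by rw [hc, hinvR, hinvR]
  set p := rho (lam b c) x with hp
  set q := rho c b with hq
  have i1 : Function.invFun (lam x) z = lam b c := by rw [← hz, hinvL]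
  have hz2 : lam y (lam (rho b x) c) = z := by rw [← hy, YB1, hz]
  have i2 : Function.invFun (lam y) z = lam (rho b x) c := by rw [← hz2, hinvL]
  have hσzy : rho (lam (rho b x) c) y = lam p q := by rw [← hy, YB2, ← hp, ← hq]
  have hWz : lam (lam y (rho b x)) (lam (rho (rho b x) (lam x b)) c) = z := by
    rw [← hy, YB1, hy, hz2]
  have i3 : Function.invFun (lam (lam y (rho b x))) z = lam (rho (rho b x) (lam x b)) c := by
    rw [← hWz, hinvL]
  have hρW : rho (lam (rho (rho b x) (lam x b)) c) (lam y (rho b x)) =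
      lam (lam p q) (rho q p) := by
    rw [← hy, YB2, YB2, ← hp, ← hq, YB3, ← hp, ← hq]
  have i4 : Function.invFun (lam (lam z p)) (lam z (lam p q)) = lam (rho p z) q := by
    rw [← YB1 z p q, hinvL]
  rw [i1, i2, i3, hσzy, hρW, ← hp, i4, YB2 z p q]
  exact (YB1 z (lam p q) (rho q p)).symm
end
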